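/- For the Lie algebra Φ''(Δ) (brackets [e₁,e₄]=[e₂,e₃]=-e₁, [e₂,e₄]=-e₃, [e₃,e₄]=-e₃+Δe₂), the functional F=e₁* is Frobenius, its principal element is e₄, and the characteristic polynomial of ad(e₄) is x(x-1)(x² - x + Δ); hence over ℂ the spectrum is {0, 1, (1±√(1-4Δ))/2}. -/

import Mathlib

open Polynomial

noncomputable section

/-- The bracket of `Φ″(Δ)` on `Fin 4 → ℂ`, basis `e₁,…,e₄` indexed `0,…,3`:
`[e₁,e₄]=[e₂,e₃]=-e₁`, `[e₂,e₄]=-e₃`, `[e₃,e₄]=-e₃+Δe₂`. -/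
def brPhi2 (Δ : ℂ) (x y : Fin 4 → ℂ) : Fin 4 → ℂ :=
  ![ -(x 0 * y 3 - x 3 * y 0) - (x 1 * y 2 - x 2 * y 1),
     Δ * (x 2 * y 3 - x 3 * y 2),
     -(x 1 * y 3 - x 3 * y 1) - (x 2 * y 3 - x 3 * y 2),
     0 ]

def etaFun (x : Fin 4 → ℂ) : Module.Dual ℂ (Fin 4 → ℂ) :=
  x 3 • LinearMap.proj 0 + x 2 • LinearMap.proj 1 - x 1 • LinearMap.proj 2 - x 0 • LinearMap.proj 3

lemma etaFun_apply (x y : Fin 4 → ℂ) :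
    etaFun x y = x 3 * y 0 + x 2 * y 1 - x 1 * y 2 - x 0 * y 3 := by
  simp [etaFun]

lemma dual_decomp (f : Module.Dual ℂ (Fin 4 → ℂ)) (y : Fin 4 → ℂ) :
    f y = y 0 * f (Pi.single 0 1) + y 1 * f (Pi.single 1 1)
        + y 2 * f (Pi.single 2 1) + y 3 * f (Pi.single 3 1) := by
  have h := LinearMap.pi_apply_eq_sum_univ f y
  have hs : ∀ i : Fin 4, (fun j => if i = j then (1:ℂ) else 0) = Pi.single i 1 := by
    intro i; funext j; simp [Pi.single_apply, eq_comm]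
  simp only [hs] at h
  rw [h, Fin.sum_univ_four]
  simp [smul_eq_mul]

def Mphi (Δ : ℂ) : Matrix (Fin 4) (Fin 4) ℂ := !![1,0,0,0; 0,0,-Δ,0; 0,1,1,0; 0,0,0,0]

lemma charmatrix_Mphi (Δ : ℂ) :
    Matrix.charmatrix (Mphi Δ) = !![X - C 1,0,0,0; 0,X,C Δ,0; 0,-C 1,X - C 1,0; 0,0,0,X] := by
  ext i j
  fin_cases i <;> fin_cases j <;>
    simp [Mphi, Matrix.charmatrix_apply, Matrix.one_apply, Matrix.diagonal_apply, Matrix.vecHead, Matrix.vecTail]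

lemma charpoly_Mphi (Δ : ℂ) :
    (Mphi Δ).charpoly = X * (X - 1) * (X ^ 2 - X + C Δ) := by
  rw [Matrix.charpoly, charmatrix_Mphi]
  rw [Matrix.det_succ_row_zero]
  simp [Fin.sum_univ_succ, Matrix.det_fin_three, Fin.succAbove]
  ring

lemma eval_charpoly (M : Matrix (Fin 4) (Fin 4) ℂ) (μ : ℂ) :
    M.charpoly.eval μ = (Matrix.scalar (Fin 4) μ - M).det := by
  rw [Matrix.charpoly, eval_det, Matrix.matPolyEquiv_charmatrix]
  simp

lemma eig_iff_root (M : Matrix (Fin 4) (Fin 4) ℂ) (μ : ℂ) :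
    Module.End.HasEigenvalue (Matrix.toLin' M) μ ↔ M.charpoly.IsRoot μ := by
  have hM : Matrix.toLin' M = Matrix.toLinAlgEquiv' M := rfl
  rw [hM, Module.End.hasEigenvalue_iff_mem_spectrum,
    AlgEquiv.spectrum_eq Matrix.toLinAlgEquiv' M, spectrum.mem_iff]
  rw [Matrix.isUnit_iff_isUnit_det, isUnit_iff_ne_zero, not_ne_iff]
  rw [IsRoot, eval_charpoly]
  have : (algebraMap ℂ (Matrix (Fin 4) (Fin 4) ℂ)) μ = Matrix.scalar (Fin 4) μ := rfl
  rw [this]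

/-- For `Φ″(Δ)`: `F = e₁*` is Frobenius, its principal element is `e₄`, the
characteristic polynomial of `ad e₄` is `x (x-1) (x² - x + Δ)`, and hence over
ℂ the spectrum is `{0, 1, (1 ± √(1-4Δ))/2}`. -/
theorem phi2_frobenius_principal_spectrum (Δ : ℂ) :
    (∃ η : (Fin 4 → ℂ) ≃ₗ[ℂ] Module.Dual ℂ (Fin 4 → ℂ),
      ∀ x y : Fin 4 → ℂ, η x y = brPhi2 Δ x y 0) ∧
    (∀ x : Fin 4 → ℂ, brPhi2 Δ (Pi.single 3 1) x 0 = x 0) ∧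
    ∃ M : Matrix (Fin 4) (Fin 4) ℂ,
      (∀ x : Fin 4 → ℂ, M.mulVec x = brPhi2 Δ (Pi.single 3 1) x) ∧
      M.charpoly = X * (X - 1) * (X ^ 2 - X + C Δ) ∧
      ∀ s : ℂ, s ^ 2 = 1 - 4 * Δ →
        ∀ μ : ℂ, Module.End.HasEigenvalue (Matrix.toLin' M) μ ↔
          μ ∈ ({0, 1, (1 + s) / 2, (1 - s) / 2} : Set ℂ) := by
  refine ⟨?_, ?_, ?_⟩
  · refine ⟨{ toFun := etaFun
              map_add' := by intro a b; simp [etaFun]; module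
              map_smul' := by intro c a; simp [etaFun]; module
              invFun := fun f => ![ -(f (Pi.single 3 1)), -(f (Pi.single 2 1)),
                                    f (Pi.single 1 1), f (Pi.single 0 1)]
              left_inv := ?_
              right_inv := ?_ }, ?_⟩
    · intro x
      funext i
      fin_cases i <;> simp [etaFun_apply, Pi.single_apply]
    · intro f
      apply LinearMap.ext
      intro y
      rw [dual_decomp f y, etaFun_apply]
      simp [Pi.single_apply]
      ring
    · intro x y
      simp [etaFun_apply, brPhi2]
      ring
  · intro x
    simp [brPhi2, Pi.single_apply]
  · refine ⟨Mphi Δ, ?_, charpoly_Mphi Δ, ?_⟩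
    · intro x
      funext i
      fin_cases i <;>
        simp [Mphi, Matrix.mulVec, dotProduct, Fin.sum_univ_four, brPhi2,
          Pi.single_apply]
    · intro s hs μ
      rw [eig_iff_root, charpoly_Mphi, IsRoot]
      simp only [eval_mul, eval_add, eval_sub, eval_pow, eval_X, eval_C, eval_one, mul_eq_zero]
      constructor
      · rintro ((h | h) | h)
        · exact Or.inl h
        · exact Or.inr (Or.inl (sub_eq_zero.mp h))
        · have hf : (μ - (1 + s) / 2) * (μ - (1 - s) / 2) = 0 := by
            linear_combination h - hs / 4
          rcases mul_eq_zero.mp hf with h' | h'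
          · exact Or.inr (Or.inr (Or.inl (sub_eq_zero.mp h')))
          · exact Or.inr (Or.inr (Or.inr (sub_eq_zero.mp h')))
      · rintro (rfl | rfl | rfl | rfl)
        · exact Or.inl (Or.inl rfl)
        · exact Or.inl (Or.inr (by ring))
        · exact Or.inr (by linear_combination hs / 4)
        · exact Or.inr (by linear_combination hs / 4)
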